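/- Over Z_2, every symmetric bilinear form on a finite-dimensional Z_2-vector space W is a 'Gram form': there exist N and a linear map r : W → Z_2^N such that B(u,v) = Σ_i r(u)_i · r(v)_i for all u, v ∈ W. -/

import Mathlib

namespace Stmt7Aux

lemma hsq : ∀ a : ZMod 2, a * a = a := by decide
lemma hadd : ∀ a : ZMod 2, a + a = 0 := by decide

variable {n : ℕ}

def F (M : Fin n → Fin n → ZMod 2) (i j : Fin n) : ZMod 2 :=
  if i < j then M i j else 0

def c (M : Fin n → Fin n → ZMod 2) (i : Fin n) : ZMod 2 :=
  M i i + ∑ j, (F M i j + F M j i)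

lemma key (M : Fin n → Fin n → ZMod 2) (hM : ∀ i j, M i j = M j i)
    (x y : Fin n → ZMod 2) :
    (∑ i, ∑ j, M i j * x i * y j) =
    ∑ p : Fin n × Fin n,
      (F M p.1 p.2 * (x p.1 + x p.2) + (if p.1 = p.2 then c M p.1 * x p.1 else 0)) *
      (F M p.1 p.2 * (y p.1 + y p.2) + (if p.1 = p.2 then c M p.1 * y p.1 else 0)) := by
  have hFd : ∀ i : Fin n, F M i i = 0 := fun i => by simp [F]
  have hterm : ∀ p : Fin n × Fin n,
      (F M p.1 p.2 * (x p.1 + x p.2) + (if p.1 = p.2 then c M p.1 * x p.1 else 0)) *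
      (F M p.1 p.2 * (y p.1 + y p.2) + (if p.1 = p.2 then c M p.1 * y p.1 else 0)) =
      F M p.1 p.2 * (x p.1 * y p.1) + F M p.1 p.2 * (x p.1 * y p.2)
        + F M p.1 p.2 * (x p.2 * y p.1) + F M p.1 p.2 * (x p.2 * y p.2)
        + (if p.1 = p.2 then c M p.1 * (x p.1 * y p.1) else 0) := by
    rintro ⟨i, j⟩
    by_cases h : i = j
    · subst h
      simp only [hFd, if_pos rfl, zero_mul, zero_add, mul_zero]
      calc c M i * x i * (c M i * y i) = c M i * c M i * (x i * y i) := by ring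
        _ = c M i * (x i * y i) := by rw [hsq]
    · simp only [if_neg h, add_zero]
      calc F M i j * (x i + x j) * (F M i j * (y i + y j))
          = F M i j * F M i j * (x i * y i) + F M i j * F M i j * (x i * y j)
            + F M i j * F M i j * (x j * y i) + F M i j * F M i j * (x j * y j) := by ring
        _ = _ := by rw [hsq]
  rw [Finset.sum_congr rfl fun p _ => hterm p, Fintype.sum_prod_type]
  simp only [Finset.sum_add_distrib]
  have hdelta : (∑ i : Fin n, ∑ j : Fin n, if i = j then c M i * (x i * y i) else 0)
      = ∑ i : Fin n, c M i * (x i * y i) := by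
    refine Finset.sum_congr rfl fun i _ => ?_
    simp [Finset.sum_ite_eq]
  rw [hdelta]
  rw [Finset.sum_comm (f := fun i j => F M i j * (x j * y i)),
      Finset.sum_comm (f := fun i j => F M i j * (x j * y j))]
  have hsplit : ∀ i j : Fin n, M i j = (F M i j + F M j i) + (if i = j then M i i else 0) := by
    intro i j
    rcases lt_trichotomy i j with h | h | h
    · simp [F, h, h.ne, not_lt.mpr h.le]
    · subst h; simp [F]
    · simp [F, h, h.ne', not_lt.mpr h.le, hM i j]
  calc ∑ i, ∑ j, M i j * x i * y j
      = ∑ i, ∑ j, ((F M i j + F M j i) * (x i * y j)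
          + (if i = j then M i i * (x i * y i) else 0)) := by
        refine Finset.sum_congr rfl fun i _ => Finset.sum_congr rfl fun j _ => ?_
        rw [hsplit i j]
        by_cases h : i = j
        · subst h; simp only [if_pos rfl, eq_self_iff_true, if_true, ite_true]; ring
        · simp only [if_neg h]; ring
    _ = ∑ i, ((∑ j, (F M i j + F M j i) * (x i * y j)) + M i i * (x i * y i)) := by
        refine Finset.sum_congr rfl fun i _ => ?_
        rw [Finset.sum_add_distrib]
        congr 1
        simp [Finset.sum_ite_eq]
    _ = _ := by
        simp only [← Finset.sum_add_distrib]
        refine Finset.sum_congr rfl fun i _ => ?_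
        have h1 : ∑ j, (F M i j * (x i * y i) + F M i j * (x i * y j) + F M j i * (x i * y j)
              + F M j i * (x i * y i))
            = (∑ j, (F M i j + F M j i) * (x i * y j))
              + (∑ j, (F M i j + F M j i)) * (x i * y i) := by
          rw [Finset.sum_mul, ← Finset.sum_add_distrib]
          refine Finset.sum_congr rfl fun j _ => by ring
        rw [h1]
        set S := ∑ j, (F M i j + F M j i) with hS
        set t := x i * y i
        rw [c, ← hS]
        have h2 : S * t + (M i i + S) * t = M i i * t := by
          have h3 := hadd S
          calc S * t + (M i i + S) * t = (S + S) * t + M i i * t := by ring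
            _ = M i i * t := by rw [h3]; ring
        calc (∑ j, (F M i j + F M j i) * (x i * y j)) + M i i * t
            = (∑ j, (F M i j + F M j i) * (x i * y j)) + (S * t + (M i i + S) * t) := by rw [h2]
          _ = _ := by ring


end Stmt7Aux

theorem stmt7 (W : Type) [AddCommGroup W] [Module (ZMod 2) W]
    [FiniteDimensional (ZMod 2) W]
    (B : W →ₗ[ZMod 2] W →ₗ[ZMod 2] ZMod 2) (hsym : ∀ u v, B u v = B v u) :
    ∃ (N : ℕ) (r : W →ₗ[ZMod 2] (Fin N → ZMod 2)),
      ∀ u v, B u v = ∑ i, r u i * r v i := by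
  classical
  set n := Module.finrank (ZMod 2) W with hn
  let b : Module.Basis (Fin n) (ZMod 2) W := Module.finBasis (ZMod 2) W
  set M : Fin n → Fin n → ZMod 2 := fun i j => B (b i) (b j) with hMdef
  have hM : ∀ i j, M i j = M j i := fun i j => hsym _ _
  let g : Fin n × Fin n → (W →ₗ[ZMod 2] ZMod 2) := fun p =>
    Stmt7Aux.F M p.1 p.2 • (b.coord p.1 + b.coord p.2) +
      (if p.1 = p.2 then Stmt7Aux.c M p.1 else 0) • b.coord p.1
  refine ⟨n * n, LinearMap.pi (fun k => g (finProdFinEquiv.symm k)), fun u v => ?_⟩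
  have hg : ∀ (p : Fin n × Fin n) (w : W), g p w =
      Stmt7Aux.F M p.1 p.2 * (b.repr w p.1 + b.repr w p.2) +
      (if p.1 = p.2 then Stmt7Aux.c M p.1 * b.repr w p.1 else 0) := by
    intro p w
    by_cases h : p.1 = p.2 <;>
      simp [g, h, Module.Basis.coord_apply, smul_eq_mul, mul_add]
  have hB : B u v = ∑ i, ∑ j, M i j * b.repr u i * b.repr v j := by
    conv_lhs => rw [← b.sum_repr u, ← b.sum_repr v]
    simp only [map_sum, map_smul, LinearMap.sum_apply, LinearMap.smul_apply, smul_eq_mul,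
      Finset.mul_sum]
    rw [Finset.sum_comm]
    refine Finset.sum_congr rfl fun i _ => Finset.sum_congr rfl fun j _ => by
      simp only [hMdef]; ring
  have step : (∑ p : Fin n × Fin n, g p u * g p v)
      = ∑ k : Fin (n * n), g (finProdFinEquiv.symm k) u * g (finProdFinEquiv.symm k) v :=
    (Equiv.sum_comp finProdFinEquiv.symm (fun p : Fin n × Fin n => g p u * g p v)).symm
  simp only [LinearMap.pi_apply]
  rw [hB, Stmt7Aux.key M hM (fun i => b.repr u i) (fun j => b.repr v j), ← step]
  exact Finset.sum_congr rfl fun p _ => by rw [hg, hg]
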